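/- Let Y be a discrete random variable on the positive integers satisfying the NBUE property: E[Y − x | Y > x] ≤ E[Y] for all integers x ≥ 0 (whenever P(Y > x) > 0). Then Var[Y] ≤ E[Y]². -/
import Mathlib

private lemma gauss_sum_aux (k : ℕ) :
    ∑ x ∈ Finset.range k, ((k : ℝ) - x) = k * (k + 1) / 2 := by
  induction k with
  | zero => simp
  | succ n ih =>
    rw [Finset.sum_range_succ]
    have h1 : ∀ x ∈ Finset.range n, ((n + 1 : ℕ) : ℝ) - x = ((n : ℝ) - x) + 1 := by
      intro x _; push_cast; ring
    rw [Finset.sum_congr rfl h1, Finset.sum_add_distrib, ih]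
    push_cast
    simp
    ring

theorem stmt_7 (f : ℕ → ℝ) (hf0 : f 0 = 0) (hfnn : ∀ k, 0 ≤ f k)
    (hsum : Summable f) (htotal : ∑' k, f k = 1)
    (hmom1 : Summable fun k : ℕ => (k : ℝ) * f k)
    (hmom2 : Summable fun k : ℕ => (k : ℝ) ^ 2 * f k)
    (E : ℝ) (hE : E = ∑' k : ℕ, (k : ℝ) * f k)
    (hNBUE : ∀ x : ℕ,
      0 < ∑' k : ℕ, (if x < k then f k else 0) →
      (∑' k : ℕ, (if x < k then ((k : ℝ) - (x : ℝ)) * f k else 0)) /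
        (∑' k : ℕ, (if x < k then f k else 0)) ≤ E) :
    (∑' k : ℕ, (k : ℝ) ^ 2 * f k) - E ^ 2 ≤ E ^ 2 := by
  have hEnn : 0 ≤ E := by
    rw [hE]; exact tsum_nonneg fun k => mul_nonneg (by positivity) (hfnn k)
  -- the two double-sum functions (first coordinate = k, second = x)
  set G : ℕ × ℕ → ℝ := fun p => if p.2 < p.1 then ((p.1 : ℝ) - p.2) * f p.1 else 0 with hG
  set H : ℕ × ℕ → ℝ := fun p => if p.2 < p.1 then f p.1 else 0 with hH
  have hGnn : ∀ p, 0 ≤ G p := by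
    rintro ⟨k, x⟩
    simp only [hG]
    split
    · rename_i h
      have hx : (x : ℝ) ≤ k := by exact_mod_cast Nat.le_of_lt h
      exact mul_nonneg (by linarith) (hfnn k)
    · exact le_refl 0
  have hHnn : ∀ p, 0 ≤ H p := by
    rintro ⟨k, x⟩
    simp only [hH]
    split
    · exact hfnn k
    · exact le_refl 0
  -- inner sums over x for fixed k
  have hGrow : ∀ k : ℕ, (∑' x : ℕ, G (k, x)) = (k * (k + 1) / 2) * f k := by
    intro k
    have h0 : ∀ x ∉ Finset.range k, G (k, x) = 0 := by
      intro x hx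
      simp only [hG]
      exact if_neg (by simpa using Finset.mem_range.not.mp hx)
    rw [tsum_eq_sum h0]
    have h1 : ∀ x ∈ Finset.range k, G (k, x) = ((k : ℝ) - x) * f k := by
      intro x hx
      simp only [hG]
      exact if_pos (Finset.mem_range.mp hx)
    rw [Finset.sum_congr rfl h1, ← Finset.sum_mul, gauss_sum_aux]
  have hHrow : ∀ k : ℕ, (∑' x : ℕ, H (k, x)) = (k : ℝ) * f k := by
    intro k
    have h0 : ∀ x ∉ Finset.range k, H (k, x) = 0 := by
      intro x hx
      simp only [hH]
      exact if_neg (by simpa using Finset.mem_range.not.mp hx)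
    rw [tsum_eq_sum h0]
    have h1 : ∀ x ∈ Finset.range k, H (k, x) = f k := by
      intro x hx
      simp only [hH]
      exact if_pos (Finset.mem_range.mp hx)
    rw [Finset.sum_congr rfl h1, Finset.sum_const, Finset.card_range, nsmul_eq_mul]
  -- summability of rows
  have hGrowS : ∀ k : ℕ, Summable fun x => G (k, x) := by
    intro k
    apply summable_of_ne_finset_zero (s := Finset.range k)
    intro x hx
    simp only [hG]
    exact if_neg (by simpa using Finset.mem_range.not.mp hx)
  have hHrowS : ∀ k : ℕ, Summable fun x => H (k, x) := by
    intro k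
    apply summable_of_ne_finset_zero (s := Finset.range k)
    intro x hx
    simp only [hH]
    exact if_neg (by simpa using Finset.mem_range.not.mp hx)
  -- summability of the double sums
  have hGsum : Summable G := by
    rw [summable_prod_of_nonneg hGnn]
    refine ⟨hGrowS, ?_⟩
    have : (fun k : ℕ => ∑' x : ℕ, G (k, x)) =
        fun k : ℕ => ((k : ℝ) ^ 2 * f k) / 2 + ((k : ℝ) * f k) / 2 := by
      funext k; rw [hGrow]; ring
    rw [this]
    exact ((hmom2.div_const 2).add (hmom1.div_const 2))
  have hHsum : Summable H := by
    rw [summable_prod_of_nonneg hHnn]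
    refine ⟨hHrowS, ?_⟩
    have : (fun k : ℕ => ∑' x : ℕ, H (k, x)) = fun k : ℕ => (k : ℝ) * f k := by
      funext k; exact hHrow k
    rw [this]; exact hmom1
  -- swapped versions
  have hGswap : Summable fun p : ℕ × ℕ => G p.swap := hGsum.prod_symm
  have hHswap : Summable fun p : ℕ × ℕ => H p.swap := hHsum.prod_symm
  have hGswapnn : ∀ p : ℕ × ℕ, 0 ≤ G p.swap := fun p => hGnn p.swap
  have hHswapnn : ∀ p : ℕ × ℕ, 0 ≤ H p.swap := fun p => hHnn p.swap
  have hScolS : Summable fun x : ℕ => ∑' k : ℕ, H (k, x) :=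
    ((summable_prod_of_nonneg hHswapnn).mp hHswap).2
  have hRcolS : Summable fun x : ℕ => ∑' k : ℕ, G (k, x) :=
    ((summable_prod_of_nonneg hGswapnn).mp hGswap).2
  -- S and R as columns
  set S : ℕ → ℝ := fun x => ∑' k : ℕ, (if x < k then f k else 0) with hS
  set R : ℕ → ℝ := fun x => ∑' k : ℕ, (if x < k then ((k : ℝ) - (x : ℝ)) * f k else 0) with hR
  have hScol : ∀ x, S x = ∑' k : ℕ, H (k, x) := fun x => rfl
  have hRcol : ∀ x, R x = ∑' k : ℕ, G (k, x) := fun x => rfl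
  -- Fubini equalities
  have hswapeqG : ∑' p : ℕ × ℕ, G p.swap = ∑' p : ℕ × ℕ, G p := by
    exact (Equiv.prodComm ℕ ℕ).tsum_eq G
  have hswapeqH : ∑' p : ℕ × ℕ, H p.swap = ∑' p : ℕ × ℕ, H p := by
    exact (Equiv.prodComm ℕ ℕ).tsum_eq H
  have hRtot : ∑' x : ℕ, R x =
      ∑' k : ℕ, ((k : ℝ) * (k + 1) / 2) * f k := by
    have h1 : ∑' x : ℕ, R x = ∑' p : ℕ × ℕ, G p.swap := by
      rw [Summable.tsum_prod' hGswap ((summable_prod_of_nonneg hGswapnn).mp hGswap).1]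
      exact tsum_congr fun x => hRcol x
    have h2 : ∑' p : ℕ × ℕ, G p = ∑' k : ℕ, ((k : ℝ) * (k + 1) / 2) * f k := by
      rw [Summable.tsum_prod' hGsum hGrowS]
      exact tsum_congr fun k => hGrow k
    rw [h1, hswapeqG, h2]
  have hStot : ∑' x : ℕ, S x = E := by
    have h1 : ∑' x : ℕ, S x = ∑' p : ℕ × ℕ, H p.swap := by
      rw [Summable.tsum_prod' hHswap ((summable_prod_of_nonneg hHswapnn).mp hHswap).1]
      exact tsum_congr fun x => hScol x
    have h2 : ∑' p : ℕ × ℕ, H p = ∑' k : ℕ, (k : ℝ) * f k := by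
      rw [Summable.tsum_prod' hHsum hHrowS]
      exact tsum_congr fun k => hHrow k
    rw [h1, hswapeqH, h2, hE]
  have hSsum : Summable S := hScolS
  have hSnn : ∀ x, 0 ≤ S x := fun x => tsum_nonneg fun k => hHnn (k, x)
  -- pointwise inequality R x ≤ E * S x
  have hkey : ∀ x : ℕ, R x ≤ E * S x := by
    intro x
    by_cases hpos : 0 < S x
    · have := hNBUE x hpos
      calc R x = (R x / S x) * S x := by field_simp
        _ ≤ E * S x := mul_le_mul_of_nonneg_right this (le_of_lt hpos)
    · have hS0 : S x = 0 := le_antisymm (not_lt.mp hpos) (hSnn x)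
      have hHxS : Summable fun k : ℕ => H (k, x) := by
        apply Summable.of_nonneg_of_le (fun k => hHnn (k, x)) _ hsum
        intro k
        simp only [hH]
        split
        · exact le_refl _
        · exact hfnn k
      have hf0' : ∀ k : ℕ, x < k → f k = 0 := by
        intro k hk
        have hle : H (k, x) ≤ S x := Summable.le_tsum hHxS k fun j _ => hHnn (j, x)
        rw [hS0] at hle
        simp only [hH, if_pos hk] at hle
        exact le_antisymm hle (hfnn k)
      have hR0 : R x = 0 := by
        rw [hR]
        have : ∀ k : ℕ, (if x < k then ((k : ℝ) - (x : ℝ)) * f k else 0) = 0 := by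
          intro k
          split
          · rename_i hk; rw [hf0' k hk, mul_zero]
          · rfl
        simp only [this, tsum_zero]
      rw [hR0, hS0, mul_zero]
  -- summability of R
  have hRnn : ∀ x, 0 ≤ R x := fun x => tsum_nonneg fun k => hGnn (k, x)
  have hRsum : Summable R := by
    apply Summable.of_nonneg_of_le hRnn hkey (hSsum.mul_left E)
  -- put it together
  have hmain : ∑' x : ℕ, R x ≤ E * E := by
    calc ∑' x : ℕ, R x ≤ ∑' x : ℕ, E * S x := Summable.tsum_le_tsum hkey hRsum (hSsum.mul_left E)
      _ = E * ∑' x : ℕ, S x := tsum_mul_left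
      _ = E * E := by rw [hStot]
  have hRval : ∑' x : ℕ, R x =
      (∑' k : ℕ, (k : ℝ) ^ 2 * f k) / 2 + E / 2 := by
    rw [hRtot]
    have : (fun k : ℕ => ((k : ℝ) * (k + 1) / 2) * f k) =
        fun k : ℕ => ((k : ℝ) ^ 2 * f k) / 2 + ((k : ℝ) * f k) / 2 := by
      funext k; ring
    rw [this, Summable.tsum_add (hmom2.div_const 2) (hmom1.div_const 2),
      tsum_div_const, tsum_div_const, hE]
  rw [hRval] at hmain
  nlinarith [hmain, hEnn]
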